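/- Homogeneous Turing theorem (2-component): let J be a real 2×2 matrix and D = diag(1,d) with 0 < d ≤ 1. Suppose tr(J) < 0, det(J) > 0, tr(D⁻¹J) > 0, and tr(D⁻¹J)² - 4 det(D⁻¹J) > 0. Then there exists k² > 0 such that the matrix -k²D + J has an eigenvalue with positive real part, while for k² = 0 all eigenvalues of J have negative real part. -/

import Mathlib

open Matrix

noncomputable def Dmat (d : ℝ) : Matrix (Fin 2) (Fin 2) ℝ := !![1, 0; 0, d]

lemma Dinv (d : ℝ) (hd : 0 < d) : (Dmat d)⁻¹ = !![1, 0; 0, d⁻¹] := by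
  apply inv_eq_right_inv
  rw [Dmat]
  ext i j
  fin_cases i <;> fin_cases j <;>
    simp [Matrix.mul_apply, Fin.sum_univ_two, mul_inv_cancel₀ hd.ne']

lemma trB (J : Matrix (Fin 2) (Fin 2) ℝ) (d : ℝ) (hd : 0 < d) :
    ((Dmat d)⁻¹ * J).trace = J 0 0 + J 1 1 / d := by
  rw [Dinv d hd]
  simp [Matrix.trace_fin_two, Matrix.mul_apply, Fin.sum_univ_two, Matrix.vecMul,
    dotProduct, div_eq_inv_mul, mul_comm]

lemma detB (J : Matrix (Fin 2) (Fin 2) ℝ) (d : ℝ) (hd : 0 < d) :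
    ((Dmat d)⁻¹ * J).det = (J 0 0 * J 1 1 - J 0 1 * J 1 0) / d := by
  rw [Dinv d hd]
  simp [Matrix.det_fin_two, Matrix.mul_apply, Fin.sum_univ_two, Matrix.vecMul,
    dotProduct]
  field_simp

lemma spec2 (N : Matrix (Fin 2) (Fin 2) ℂ) (lam : ℂ) :
    lam ∈ spectrum ℂ N ↔ lam ^ 2 - N.trace * lam + N.det = 0 := by
  rw [spectrum.mem_iff, Matrix.isUnit_iff_isUnit_det, isUnit_iff_ne_zero, not_not]
  constructor <;> intro h
  · rw [← h]
    simp [Matrix.det_fin_two, Matrix.trace_fin_two, Matrix.algebraMap_eq_diagonal,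
      Matrix.diagonal, Matrix.sub_apply]
    ring
  · rw [show (algebraMap ℂ _ lam - N).det = lam ^ 2 - N.trace * lam + N.det by
      simp [Matrix.det_fin_two, Matrix.trace_fin_two, Matrix.algebraMap_eq_diagonal,
        Matrix.diagonal, Matrix.sub_apply]; ring, h]

lemma spec2' (A : Matrix (Fin 2) (Fin 2) ℝ) (lam : ℂ) :
    lam ∈ spectrum ℂ (A.map Complex.ofReal) ↔
      lam ^ 2 - (A.trace : ℂ) * lam + (A.det : ℂ) = 0 := by
  rw [spec2]
  simp [Matrix.trace_fin_two, Matrix.det_fin_two, Matrix.map_apply]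

theorem stmt17 (J : Matrix (Fin 2) (Fin 2) ℝ) (d : ℝ)
    (hd : 0 < d) (hd1 : d ≤ 1)
    (htr : J.trace < 0) (hdet : 0 < J.det)
    (htrB : 0 < ((Dmat d)⁻¹ * J).trace)
    (hP : 0 < ((Dmat d)⁻¹ * J).trace ^ 2 - 4 * ((Dmat d)⁻¹ * J).det) :
    (∃ k2 : ℝ, 0 < k2 ∧ ∃ lam ∈ spectrum ℂ
        (((-k2) • Dmat d + J).map Complex.ofReal), 0 < lam.re) ∧
    (∀ lam ∈ spectrum ℂ (J.map Complex.ofReal), lam.re < 0) := by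
  set a := J 0 0; set b := J 0 1; set c := J 1 0; set e := J 1 1
  rw [trB J d hd] at htrB
  rw [trB J d hd, detB J d hd] at hP
  have hdetJ : J.det = a * e - b * c := Matrix.det_fin_two J
  have htrJ : J.trace = a + e := Matrix.trace_fin_two J
  constructor
  · -- instability part
    set k2 : ℝ := (a + e / d) / 2 with hk2
    refine ⟨k2, by positivity, ?_⟩
    set M : Matrix (Fin 2) (Fin 2) ℝ := (-k2) • Dmat d + J with hM
    have htM : M.trace = (a - k2) + (e - d * k2) := by
      simp [hM, Matrix.trace_fin_two, Dmat, Matrix.add_apply, Matrix.smul_apply]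
      ring
    have hdM : M.det = (a - k2) * (e - d * k2) - b * c := by
      simp [hM, Matrix.det_fin_two, Dmat, Matrix.add_apply, Matrix.smul_apply]
      ring
    have hδ : M.det < 0 := by
      rw [hdM, hk2]
      have h1 : d * (e / d) = e := by field_simp
      have hP2 : 0 < d * (a + e / d) ^ 2 - 4 * (a * e - b * c) := by
        have h := mul_pos hd hP
        have h3 : d * ((a + e / d) ^ 2 - 4 * ((a * e - b * c) / d))
            = d * (a + e / d) ^ 2 - 4 * (a * e - b * c) := by
          field_simp
        linarith [h3 ▸ h]
      have hEq : 4 * ((a - (a + e / d) / 2) * (e - d * ((a + e / d) / 2)) - b * c)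
          = -(d * (a + e / d) ^ 2 - 4 * (a * e - b * c)) := by
        linear_combination (2 * (e / d) + 2 * a) * h1
      linarith
    set t := M.trace
    set δ := M.det
    have hdisc : 0 ≤ t ^ 2 - 4 * δ := by nlinarith
    set s := Real.sqrt (t ^ 2 - 4 * δ) with hs
    have hs2 : s ^ 2 = t ^ 2 - 4 * δ := Real.sq_sqrt hdisc
    have hsn : 0 ≤ s := Real.sqrt_nonneg _
    set lam : ℝ := (t + s) / 2 with hlam
    have hpos : 0 < lam := by
      have habs : |t| < s := by
        nlinarith [sq_abs t, abs_nonneg t]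
      have := neg_abs_le t
      rw [hlam]; linarith
    have heq : lam ^ 2 - t * lam + δ = 0 := by
      rw [hlam]; linear_combination hs2 / 4
    refine ⟨(lam : ℂ), ?_, by simpa using hpos⟩
    rw [spec2']
    exact_mod_cast congrArg (Complex.ofReal) heq
  · -- stability part
    intro lam hlam
    rw [spec2'] at hlam
    set x := lam.re; set y := lam.im
    have h1 : x ^ 2 - y ^ 2 - J.trace * x + J.det = 0 := by
      have := congrArg Complex.re hlam
      simpa [pow_two, Complex.mul_re, Complex.mul_im, Complex.add_re, Complex.sub_re] using this
    have h2 := congrArg Complex.im hlam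
    simp [pow_two, Complex.mul_re, Complex.mul_im] at h2
    rcases mul_eq_zero.mp (show y * (2 * x - J.trace) = 0 by linear_combination h2) with hy | hx
    · by_contra hxn
      push_neg at hxn
      rw [hy] at h1
      nlinarith
    · linarith
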